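/- Suppose p = q·z + r with q ∈ K a primitive m-th root of unity (m > 1) and r ∈ R, r ≠ 0. Then the polynomials p₀, p₁, …, p_{m−1} are pairwise coprime in the sense that for 0 ≤ k < l ≤ m−1, every common divisor of p_k and p_l in A is a unit (a nonzero element of K). -/

import Mathlib

open Polynomial

lemma mv_isUnit_eq_C {K : Type*} [Field K] :
    ∀ (n : ℕ) (f : MvPolynomial (Fin n) K), IsUnit f →
      ∃ c : K, c ≠ 0 ∧ f = MvPolynomial.C c := by
  intro n
  induction n with
  | zero =>
    intro f hf
    have h := MvPolynomial.eq_C_of_isEmpty f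
    refine ⟨f.coeff 0, fun hc => ?_, h⟩
    rw [h, hc, map_zero] at hf
    exact hf.ne_zero rfl
  | succ n ih =>
    intro f hf
    have h1 : IsUnit (MvPolynomial.finSuccEquiv K n f) := hf.map _
    obtain ⟨g, hg, hgf⟩ := Polynomial.isUnit_iff.mp h1
    obtain ⟨c, hc, rfl⟩ := ih g hg
    refine ⟨c, hc, ?_⟩
    have h2 := RingHom.congr_fun (MvPolynomial.finSuccEquiv_comp_C_eq_C (R := K) n) c
    simp only [RingHom.comp_apply] at h2
    calc f = (MvPolynomial.finSuccEquiv K n).symm (MvPolynomial.finSuccEquiv K n f) := by simp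
    _ = MvPolynomial.C c := by rw [← hgf]; exact h2

lemma iter_formula {K : Type*} [Field K] {n : ℕ} (q : K) (r : MvPolynomial (Fin n) K)
    (p : Polynomial (MvPolynomial (Fin n) K))
    (hp : p = C (MvPolynomial.C q) * X + C r) (k : ℕ) :
    (⇑(Polynomial.aeval p))^[k] X =
      C (MvPolynomial.C (q ^ k)) * X +
        C (MvPolynomial.C (∑ i ∈ Finset.range k, q ^ i) * r) := by
  induction k with
  | zero => simp
  | succ k ih =>
    rw [Function.iterate_succ_apply', ih]
    simp only [map_add, map_mul, aeval_C, aeval_X, hp, Finset.sum_range_succ, pow_succ,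
      map_pow, map_sum, Polynomial.algebraMap_eq]
    ring

/-- **Remark (§2).** If `p = q·z + r` with `q ∈ K` a primitive `m`-th root
of unity (`m > 1`) and `r ∈ R`, `r ≠ 0`, then the iterates
`p₀, p₁, …, p_{m-1}` are pairwise coprime: for `0 ≤ k < l ≤ m - 1`, any
common divisor of `p_k` and `p_l` in `A` is a nonzero constant of `K`. -/
theorem granville_variation_pairwise_coprime
    {K : Type*} [Field K] {n : ℕ} (hn : 1 ≤ n)
    (q : K) (r : MvPolynomial (Fin n) K) (hr : r ≠ 0)
    (m : ℕ) (hm : 1 < m) (hq : IsPrimitiveRoot q m)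
    (p : Polynomial (MvPolynomial (Fin n) K))
    (hp : p = C (MvPolynomial.C q) * X + C r) :
    ∀ k l : ℕ, k < l → l ≤ m - 1 →
      ∀ D : Polynomial (MvPolynomial (Fin n) K),
        D ∣ (⇑(Polynomial.aeval p))^[k] X →
        D ∣ (⇑(Polynomial.aeval p))^[l] X →
        ∃ c : K, c ≠ 0 ∧ D = C (MvPolynomial.C c) := by
  intro k l hkl hlm D hDk hDl
  set d := l - k with hd
  have hdpos : 0 < d := Nat.sub_pos_of_lt hkl
  have hldk : l = d + k := by omega
  have hdm : d < m := by omega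
  set s : ℕ → K := fun j => ∑ i ∈ Finset.range j, q ^ i with hs
  have hsplit : s l = s d + q ^ d * s k := by
    rw [hldk, hs]
    simp only [Finset.sum_range_add, pow_add, Finset.mul_sum]
  have hqd : q ^ d ≠ 1 := hq.pow_ne_one_of_pos_of_lt hdpos.ne' hdm
  have hsd : s d ≠ 0 := by
    intro h0
    apply hqd
    have hg := geom_sum_mul q d
    rw [show (∑ i ∈ Finset.range d, q ^ i) = s d from rfl, h0, zero_mul] at hg
    linear_combination -hg
  rw [iter_formula q r p hp] at hDk hDl
  -- D divides the constant difference
  have hkey : (C (MvPolynomial.C (q ^ l)) * X + C (MvPolynomial.C (s l) * r))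
      - C (MvPolynomial.C (q ^ d)) *
        (C (MvPolynomial.C (q ^ k)) * X + C (MvPolynomial.C (s k) * r))
      = C (MvPolynomial.C (s d) * r) := by
    rw [hsplit, hldk, pow_add]
    simp only [map_add, map_mul]
    ring
  have hDc : D ∣ C (MvPolynomial.C (s d) * r) := by
    rw [← hkey]
    exact dvd_sub hDl (hDk.mul_left _)
  have hcne : (C (MvPolynomial.C (s d) * r) : Polynomial (MvPolynomial (Fin n) K)) ≠ 0 := by
    simp only [ne_eq, C_eq_zero, mul_eq_zero, not_or]
    exact ⟨fun h => hsd (by simpa using h), hr⟩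
  have hdeg : D.natDegree = 0 := by
    have h := Polynomial.natDegree_le_of_dvd hDc hcne
    rw [natDegree_C] at h
    omega
  obtain ⟨d0, rfl⟩ : ∃ d0, D = C d0 := ⟨D.coeff 0, Polynomial.eq_C_of_natDegree_eq_zero hdeg⟩
  -- d0 divides the (unit) leading coefficient of p_k
  have hcoeff : d0 ∣ (C (MvPolynomial.C (q ^ k)) * X
      + C (MvPolynomial.C (s k) * r)).coeff 1 :=
    (Polynomial.C_dvd_iff_dvd_coeff _ _).mp hDk 1
  have hc1 : (C (MvPolynomial.C (q ^ k)) * X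
      + C (MvPolynomial.C (s k) * r)).coeff 1 = MvPolynomial.C (q ^ k) := by
    simp only [coeff_add, coeff_C_mul, coeff_X_one, mul_one, coeff_C,
      one_ne_zero, if_false, add_zero]
  rw [hc1] at hcoeff
  have hunit : IsUnit (MvPolynomial.C (q ^ k) : MvPolynomial (Fin n) K) := by
    refine IsUnit.map (MvPolynomial.C : K →+* MvPolynomial (Fin n) K) ?_
    exact isUnit_iff_ne_zero.mpr (pow_ne_zero _ (hq.ne_zero (by omega)))
  obtain ⟨c, hc, rfl⟩ := mv_isUnit_eq_C n d0 (isUnit_of_dvd_unit hcoeff hunit)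
  exact ⟨c, hc, rfl⟩
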